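/- Let H be a (2k+1)-graph (k ≥ 1), and let G be obtained from H by replacing each vertex v by a cycle C_v of length 2k+1 in which each edge has multiplicity k (so C_v is 2k-regular), with the 2k+1 edges of H at v attached to the 2k+1 distinct vertices of C_v. Then G is a (2k+1)-graph, and the set F of old edges of H forms a perfect matching of G. -/

import Mathlib

/-- A multigraph on vertex type `V` with edge type `E`: each edge has a pair of endpoints. -/
structure Multigraph (V E : Type) where
  ends : E → Sym2 V

namespace Multigraph

variable {V E : Type}

/-- No loops: no edge has equal endpoints. -/
def Loopless (G : Multigraph V E) : Prop := ∀ e, ¬ (G.ends e).IsDiag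

/-- The degree of a vertex: the number of edges incident with it. -/
noncomputable def degree (G : Multigraph V E) (v : V) : ℕ := Nat.card {e | v ∈ G.ends e}

/-- The edge cut `∂(X)`: edges with exactly one end in `X`. -/
def cut (G : Multigraph V E) (X : Set V) : Set E :=
  {e | ∃ u ∈ X, ∃ w ∉ X, G.ends e = s(u, w)}

/-- The underlying simple graph. -/
def toSimple (G : Multigraph V E) : SimpleGraph V where
  Adj u w := u ≠ w ∧ ∃ e, G.ends e = s(u, w)
  symm := ⟨by
    rintro u w ⟨h, e, he⟩
    exact ⟨h.symm, e, by rw [he, Sym2.eq_swap]⟩⟩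
  loopless := ⟨by rintro u ⟨h, _⟩; exact h rfl⟩

/-- Connectivity of a multigraph. -/
def Connected (G : Multigraph V E) : Prop := G.toSimple.Connected

/-- `M` is a perfect matching on the vertex set `A`: every edge of `M` has both ends
in `A` and every vertex of `A` is covered by exactly one edge of `M`. -/
def IsPerfectMatchingOn (G : Multigraph V E) (A : Set V) (M : Set E) : Prop :=
  (∀ e ∈ M, ∀ v ∈ G.ends e, v ∈ A) ∧ ∀ v ∈ A, ∃! e, e ∈ M ∧ v ∈ G.ends e

/-- A perfect matching of `G`. -/
def IsPerfectMatching (G : Multigraph V E) (M : Set E) : Prop :=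
  G.IsPerfectMatchingOn Set.univ M

/-- `θ(G−S)`: the number of odd components of `G − S`. -/
noncomputable def theta (G : Multigraph V E) (S : Set V) : ℕ :=
  Nat.card {c : (G.toSimple.induce Sᶜ).ConnectedComponent // Odd (Nat.card c.supp)}

/-- A barrier: a vertex set `S` with `θ(G−S) = |S|`. -/
def IsBarrier (G : Multigraph V E) (S : Set V) : Prop := G.theta S = Nat.card S

/-- Bi-critical: deleting any two distinct vertices leaves a graph with a perfect matching. -/
def Bicritical (G : Multigraph V E) : Prop :=
  ∀ u v : V, u ≠ v → ∃ M, G.IsPerfectMatchingOn {u, v}ᶜ M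

/-- Bipartite multigraph. -/
def Bipartite (G : Multigraph V E) : Prop := G.toSimple.Colorable 2

/-- `k`-vertex-connected: deleting fewer than `k` vertices leaves a connected graph. -/
def VertexConnected (G : Multigraph V E) (k : ℕ) : Prop :=
  ∀ S : Set V, Nat.card S < k → (G.toSimple.induce Sᶜ).Connected

/-- A brick: non-bipartite, bi-critical and 3-vertex-connected. -/
def IsBrick (G : Multigraph V E) : Prop :=
  ¬ G.Bipartite ∧ G.Bicritical ∧ G.VertexConnected 3

/-- A proper edge coloring with `k` colors exists. -/
def EdgeColorable (G : Multigraph V E) (k : ℕ) : Prop :=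
  ∃ c : E → Fin k, ∀ e f, e ≠ f → (∃ v, v ∈ G.ends e ∧ v ∈ G.ends f) → c e ≠ c f

/-- A non-trivial odd vertex set: odd cardinality, different from `1` and `|V|−1`. -/
def NontrivialOdd (_G : Multigraph V E) (X : Set V) : Prop :=
  Odd (Nat.card X) ∧ Nat.card X ≠ 1 ∧ Nat.card X ≠ Nat.card V - 1

/-- An `r`-graph: a connected loopless `r`-regular multigraph in which every odd
vertex set has at least `r` edges leaving it. -/
def IsRGraph (G : Multigraph V E) (r : ℕ) : Prop :=
  G.Loopless ∧ G.Connected ∧ (∀ v, G.degree v = r) ∧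
    ∀ X : Set V, Odd (Nat.card X) → r ≤ Nat.card (G.cut X)

open Classical in
/-- The projection identifying the complement of `X` to a single new vertex. -/
noncomputable def proj (X : Set V) (v : V) : ↥X ⊕ Unit :=
  if h : v ∈ X then .inl ⟨v, h⟩ else .inr ()

/-- Contract the complement of `X` to a single vertex, deleting the resulting loops
(i.e. the edges with both ends outside `X`) but keeping multiplicities. -/
noncomputable def contract (G : Multigraph V E) (X : Set V) :
    Multigraph (↥X ⊕ Unit) {e // ¬ ((G.ends e).map (proj X)).IsDiag} where
  ends e := (G.ends e.1).map (proj X)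

/-- The spanning sub-multigraph with edge set `A`. -/
def restrict (G : Multigraph V E) (A : Set E) : Multigraph V ↥A where
  ends e := G.ends e.1

open Classical in
/-- Expansion: replace every vertex `v` by a cycle `C_v` of length `2k+1` in which every
edge has multiplicity `k`; the `2k+1` old edges at `v` are attached to the `2k+1` distinct
vertices of `C_v` according to the bijection `φ v`. -/
noncomputable def expand (H : Multigraph V E) (k : ℕ)
    (φ : (v : V) → {e // v ∈ H.ends e} ≃ ZMod (2 * k + 1)) :
    Multigraph (V × ZMod (2 * k + 1)) (E ⊕ V × ZMod (2 * k + 1) × Fin k) where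
  ends := fun e => match e with
    | .inl e => (H.ends e).map (fun v => (v, if h : v ∈ H.ends e then φ v ⟨e, h⟩ else 0))
    | .inr (v, i, _) => s((v, i), (v, i + 1))

end Multigraph

namespace Multigraph

variable {V E : Type}

open Classical in
lemma expand_ends_inl (H : Multigraph V E) (k : ℕ)
    (φ : (v : V) → {e // v ∈ H.ends e} ≃ ZMod (2 * k + 1)) (e : E) :
    (H.expand k φ).ends (Sum.inl e)
      = (H.ends e).map (fun v => (v, if h : v ∈ H.ends e then φ v ⟨e, h⟩ else 0)) := rfl

lemma expand_ends_inr (H : Multigraph V E) (k : ℕ)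
    (φ : (v : V) → {e // v ∈ H.ends e} ≃ ZMod (2 * k + 1)) (v : V) (i : ZMod (2*k+1)) (t : Fin k) :
    (H.expand k φ).ends (Sum.inr (v,i,t)) = s((v, i), (v, i + 1)) := rfl

lemma mem_expand_inl (H : Multigraph V E) (k : ℕ)
    (φ : (v : V) → {e // v ∈ H.ends e} ≃ ZMod (2 * k + 1)) (e : E) (u : V) (i : ZMod (2*k+1)) :
    ((u, i) ∈ (H.expand k φ).ends (Sum.inl e)) ↔ ∃ h : u ∈ H.ends e, φ u ⟨e, h⟩ = i := by
  rw [expand_ends_inl, Sym2.mem_map]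
  constructor
  · rintro ⟨a, ha, hfa⟩
    have h1 : a = u := congrArg Prod.fst hfa
    subst h1
    refine ⟨ha, ?_⟩
    have h2 := congrArg Prod.snd hfa
    simpa [dif_pos ha] using h2
  · rintro ⟨h, hφ⟩
    exact ⟨u, h, by simp [dif_pos h, hφ]⟩

lemma mem_expand_inr (H : Multigraph V E) (k : ℕ)
    (φ : (v : V) → {e // v ∈ H.ends e} ≃ ZMod (2 * k + 1)) (v : V) (j : ZMod (2*k+1))
    (t : Fin k) (u : V) (i : ZMod (2*k+1)) :
    ((u, i) ∈ (H.expand k φ).ends (Sum.inr (v,j,t))) ↔ u = v ∧ (i = j ∨ i = j + 1) := by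
  rw [expand_ends_inr, Sym2.mem_iff]
  constructor
  · rintro (h | h) <;> rw [Prod.ext_iff] at h
    · exact ⟨h.1, Or.inl h.2⟩
    · exact ⟨h.1, Or.inr h.2⟩
  · rintro ⟨rfl, (rfl | rfl)⟩
    · exact Or.inl rfl
    · exact Or.inr rfl

lemma zmod_ne_succ {k : ℕ} (hk : 1 ≤ k) (i : ZMod (2*k+1)) : i ≠ i + 1 := by
  haveI : Fact (1 < 2*k+1) := ⟨by omega⟩
  intro h
  exact (one_ne_zero (α := ZMod (2*k+1))) (left_eq_add.mp h)

lemma zmod_exists_nat {k : ℕ} (i j : ZMod (2*k+1)) : ∃ m : ℕ, j = i + m :=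
  ⟨(j - i).val, by simp [ZMod.natCast_val, ZMod.cast_id]⟩

/-- Boundary position on the cycle. -/
lemma exists_boundary {k : ℕ} (g : ZMod (2*k+1) → Prop) (i : ZMod (2*k+1)) (hi : g i)
    (j : ZMod (2*k+1)) (hj : ¬ g j) : ∃ p, g p ∧ ¬ g (p+1) := by
  by_contra hcon
  push_neg at hcon
  have key : ∀ m : ℕ, g (i + m) := by
    intro m
    induction m with
    | zero => simpa using hi
    | succ m ih =>
        have h2 := hcon _ ih
        have : (i + m) + 1 = i + ((m + 1 : ℕ) : ZMod (2*k+1)) := by push_cast; ring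
        rwa [this] at h2
  obtain ⟨m, hm⟩ := zmod_exists_nat i j
  exact hj (hm ▸ key m)

lemma map_fst_isDiag {β : Type*} (f : V → V × β) (hf : ∀ v, (f v).1 = v) (s : Sym2 V) :
    (Sym2.map f s).IsDiag → s.IsDiag := by
  induction s using Sym2.ind with
  | _ a b =>
    rw [Sym2.map_pair_eq, Sym2.mk_isDiag_iff, Sym2.mk_isDiag_iff]
    intro h
    have h2 := congrArg Prod.fst h
    rwa [hf, hf] at h2

lemma expand_loopless (H : Multigraph V E) (k : ℕ) (hk : 1 ≤ k)
    (φ : (v : V) → {e // v ∈ H.ends e} ≃ ZMod (2 * k + 1)) (hH : H.Loopless) :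
    (H.expand k φ).Loopless := by
  rintro (e | ⟨v, i, t⟩)
  · rw [expand_ends_inl]
    intro hd
    exact hH e (map_fst_isDiag _ (fun v => rfl) _ hd)
  · rw [expand_ends_inr]
    intro hd
    rw [Sym2.isDiag_iff_proj_eq] at hd
    exact zmod_ne_succ hk i (congrArg Prod.snd hd)

open Classical in
lemma expand_degree [Fintype V] [Fintype E] (H : Multigraph V E) (k : ℕ) (hk : 1 ≤ k)
    (φ : (v : V) → {e // v ∈ H.ends e} ≃ ZMod (2 * k + 1)) (v : V) (i : ZMod (2*k+1)) :
    (H.expand k φ).degree (v, i) = 2 * k + 1 := by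
  classical
  set e0 : E := ((φ v).symm i).1 with he0
  set T : Finset (E ⊕ V × ZMod (2*k+1) × Fin k) :=
    ({Sum.inl e0} ∪ (Finset.univ.image fun t : Fin k => Sum.inr (v, i, t)))
      ∪ Finset.univ.image (fun t : Fin k => Sum.inr (v, i - 1, t)) with hT
  have hinj1 : Function.Injective (fun t : Fin k => (Sum.inr (v, i, t) : E ⊕ V × ZMod (2*k+1) × Fin k)) := by
    intro a b h; simpa using h
  have hinj2 : Function.Injective (fun t : Fin k => (Sum.inr (v, i - 1, t) : E ⊕ V × ZMod (2*k+1) × Fin k)) := by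
    intro a b h; simpa using h
  have hii : i - 1 ≠ i := by
    intro h
    apply zmod_ne_succ hk i
    conv_rhs => rw [← h]
    ring
  have hset : {e | (v, i) ∈ (H.expand k φ).ends e} = (↑T : Set _) := by
    ext e
    rcases e with e | ⟨w, j, t⟩
    · rw [Set.mem_setOf_eq, mem_expand_inl, Finset.mem_coe]
      have hTm : (Sum.inl e : E ⊕ V × ZMod (2*k+1) × Fin k) ∈ T ↔ e = e0 := by
        simp [hT]
      rw [hTm]
      constructor
      · rintro ⟨h, hφ⟩
        have h3 : (φ v).symm i = ⟨e, h⟩ := by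
          rw [Equiv.symm_apply_eq, hφ]
        exact (congrArg Subtype.val h3).symm
      · rintro rfl
        refine ⟨((φ v).symm i).2, ?_⟩
        have h4 : (⟨e0, ((φ v).symm i).2⟩ : {e // v ∈ H.ends e}) = (φ v).symm i :=
          Subtype.ext rfl
        rw [h4, Equiv.apply_symm_apply]
    · rw [Set.mem_setOf_eq, mem_expand_inr, Finset.mem_coe]
      have hTm : (Sum.inr (w, j, t) : E ⊕ V × ZMod (2*k+1) × Fin k) ∈ T ↔
          ((v = w ∧ i = j) ∨ (v = w ∧ i - 1 = j)) := by
        simp [hT]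
      rw [hTm]
      constructor
      · rintro ⟨rfl, (rfl | rfl)⟩
        · exact Or.inl ⟨rfl, rfl⟩
        · exact Or.inr ⟨rfl, by ring⟩
      · rintro (⟨rfl, rfl⟩ | ⟨rfl, rfl⟩)
        · exact ⟨rfl, Or.inl rfl⟩
        · exact ⟨rfl, Or.inr (by ring)⟩
  have hd1 : Disjoint ({Sum.inl e0} : Finset (E ⊕ V × ZMod (2*k+1) × Fin k))
      (Finset.univ.image fun t : Fin k => Sum.inr (v, i, t)) := by
    rw [Finset.disjoint_left]
    rintro x hx hx'
    simp only [Finset.mem_singleton] at hx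
    subst hx
    simp at hx'
  have hd2 : Disjoint (({Sum.inl e0} : Finset (E ⊕ V × ZMod (2*k+1) × Fin k))
      ∪ Finset.univ.image fun t : Fin k => Sum.inr (v, i, t))
      (Finset.univ.image (fun t : Fin k => Sum.inr (v, i - 1, t))) := by
    rw [Finset.disjoint_left]
    rintro x hx hx'
    simp only [Finset.mem_image, Finset.mem_univ, true_and] at hx'
    obtain ⟨t, rfl⟩ := hx'
    simp only [Finset.mem_union, Finset.mem_singleton, reduceCtorEq, false_or,
      Finset.mem_image, Finset.mem_univ, true_and, Sum.inr.injEq, Prod.mk.injEq] at hx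
    obtain ⟨t', ht'⟩ := hx
    exact hii ht'.1.symm
  rw [degree, hset, Nat.card_coe_set_eq, Set.ncard_coe_finset, hT,
    Finset.card_union_of_disjoint hd2, Finset.card_union_of_disjoint hd1,
    Finset.card_singleton, Finset.card_image_of_injective _ hinj1,
    Finset.card_image_of_injective _ hinj2, Finset.card_univ, Fintype.card_fin]
  ring

lemma odd_iff_zmod (n : ℕ) : Odd n ↔ (n : ZMod 2) = 1 := by
  rw [Nat.odd_iff, ← ZMod.natCast_mod n 2]
  rcases Nat.mod_two_eq_zero_or_one n with h | h <;> rw [h] <;> decide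

open Classical in
lemma per_edge [Fintype V] (X : Set V) (a b : V) (hs : a ≠ b) :
    ((X.toFinset.filter (· ∈ s(a, b))).card : ZMod 2)
      = if (∃ u ∈ X, ∃ w ∉ X, s(a,b) = s(u,w)) then 1 else 0 := by
  classical
  have hfil : X.toFinset.filter (· ∈ s(a,b)) = X.toFinset.filter (fun v => v = a ∨ v = b) := by
    apply Finset.filter_congr
    intro v _
    simp [Sym2.mem_iff]
  have hcond : (∃ u ∈ X, ∃ w ∉ X, s(a,b) = s(u,w)) ↔ ((a ∈ X ∧ b ∉ X) ∨ (b ∈ X ∧ a ∉ X)) := by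
    constructor
    · rintro ⟨u, hu, w, hw, hsw⟩
      rcases Sym2.eq_iff.mp hsw with ⟨rfl, rfl⟩ | ⟨rfl, rfl⟩
      · exact Or.inl ⟨hu, hw⟩
      · exact Or.inr ⟨hu, hw⟩
    · rintro (⟨h1, h2⟩ | ⟨h1, h2⟩)
      · exact ⟨a, h1, b, h2, rfl⟩
      · exact ⟨b, h1, a, h2, Sym2.eq_swap⟩
  rw [hfil, Finset.filter_or]
  simp only [hcond]
  have hset2 : ∀ (c : V), c ∈ X → Finset.filter (fun v => v = c) X.toFinset = {c} := by
    intro c hc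
    ext v
    simp only [Finset.mem_filter, Set.mem_toFinset, Finset.mem_singleton]
    constructor
    · rintro ⟨_, rfl⟩; rfl
    · rintro rfl; exact ⟨hc, rfl⟩
  have hset0 : ∀ (c : V), c ∉ X → Finset.filter (fun v => v = c) X.toFinset = ∅ := by
    intro c hc
    ext v
    simp only [Finset.mem_filter, Set.mem_toFinset, Finset.notMem_empty, iff_false, not_and]
    rintro h rfl
    exact hc h
  by_cases ha : a ∈ X <;> by_cases hb : b ∈ X
  · rw [hset2 a ha, hset2 b hb, if_neg (by tauto),
      Finset.card_union_of_disjoint (by simpa using hs), Finset.card_singleton,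
      Finset.card_singleton]
    decide
  · rw [hset2 a ha, hset0 b hb, if_pos (Or.inl ⟨ha, hb⟩), Finset.union_empty, Finset.card_singleton]
    decide
  · rw [hset0 a ha, hset2 b hb, if_pos (Or.inr ⟨hb, ha⟩), Finset.empty_union, Finset.card_singleton]
    decide
  · rw [hset0 a ha, hset0 b hb, if_neg (by tauto), Finset.union_empty, Finset.card_empty]
    decide

open Classical in
lemma odd_card_cut [Fintype V] [Fintype E] (G : Multigraph V E) (hG : G.Loopless)
    (hdeg : ∀ v, Odd (G.degree v)) (X : Set V) (hX : Odd (Nat.card X)) :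
    Odd (Nat.card (G.cut X)) := by
  classical
  have hXf : Nat.card X = X.toFinset.card := by
    rw [Nat.card_coe_set_eq, Set.ncard_eq_toFinset_card']
  have hcut : Nat.card (G.cut X) = ((Finset.univ : Finset E).filter (· ∈ G.cut X)).card := by
    rw [Nat.card_coe_set_eq, Set.ncard_eq_toFinset_card']
    congr 1
    ext e
    simp
  have hdeg' : ∀ v, G.degree v = ((Finset.univ : Finset E).filter (fun e => v ∈ G.ends e)).card := by
    intro v
    rw [degree, Nat.card_coe_set_eq, Set.ncard_eq_toFinset_card']
    congr 1
    ext e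
    simp
  have hper : ∀ e : E, ((X.toFinset.filter (· ∈ G.ends e)).card : ZMod 2)
      = if e ∈ G.cut X then 1 else 0 := by
    intro e
    obtain ⟨a, b, hse⟩ :=
      Sym2.ind (f := fun s => ∃ a b, s = s(a, b)) (fun a b => ⟨a, b, rfl⟩) (G.ends e)
    · have hab : a ≠ b := by
        have := hG e
        rw [hse, Sym2.mk_isDiag_iff] at this
        exact this
      have hcm : e ∈ G.cut X ↔ (∃ u ∈ X, ∃ w ∉ X, s(a,b) = s(u,w)) := by
        rw [cut, Set.mem_setOf_eq, hse]
      rw [hse, hcm]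
      convert per_edge X a b hab using 2
  have hsum : ∑ v ∈ X.toFinset, G.degree v = ∑ e : E, (X.toFinset.filter (· ∈ G.ends e)).card := by
    calc ∑ v ∈ X.toFinset, G.degree v
        = ∑ v ∈ X.toFinset, ∑ e : E, (if v ∈ G.ends e then 1 else 0) := by
          refine Finset.sum_congr rfl fun v _ => ?_
          rw [hdeg', Finset.card_filter]
      _ = ∑ e : E, ∑ v ∈ X.toFinset, (if v ∈ G.ends e then 1 else 0) := Finset.sum_comm
      _ = _ := by
          refine Finset.sum_congr rfl fun e _ => ?_
          rw [Finset.card_filter]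
  rw [odd_iff_zmod _] at hX ⊢
  calc ((Nat.card (G.cut X) : ZMod 2))
      = ∑ e : E, (if e ∈ G.cut X then 1 else 0 : ZMod 2) := by
        rw [hcut, Finset.card_filter, Nat.cast_sum]
        refine Finset.sum_congr rfl fun e _ => ?_
        split <;> simp
    _ = ∑ e : E, ((X.toFinset.filter (· ∈ G.ends e)).card : ZMod 2) := by
        refine Finset.sum_congr rfl fun e _ => (hper e).symm
    _ = ((∑ e : E, (X.toFinset.filter (· ∈ G.ends e)).card : ℕ) : ZMod 2) := by
        rw [Nat.cast_sum]
    _ = ((∑ v ∈ X.toFinset, G.degree v : ℕ) : ZMod 2) := by rw [hsum]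
    _ = ∑ v ∈ X.toFinset, ((G.degree v : ZMod 2)) := by rw [Nat.cast_sum]
    _ = ∑ v ∈ X.toFinset, (1 : ZMod 2) := by
        refine Finset.sum_congr rfl fun v _ => ?_
        exact (odd_iff_zmod _).mp (hdeg v)
    _ = (X.toFinset.card : ZMod 2) := by simp
    _ = 1 := by rw [← hXf, hX]

lemma expand_cyc_adj (H : Multigraph V E) (k : ℕ) (hk : 1 ≤ k)
    (φ : (v : V) → {e // v ∈ H.ends e} ≃ ZMod (2 * k + 1)) (v : V) (i : ZMod (2*k+1)) :
    (H.expand k φ).toSimple.Adj (v, i) (v, i + 1) := by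
  refine ⟨?_, Sum.inr (v, i, ⟨0, hk⟩), expand_ends_inr H k φ v i ⟨0, hk⟩⟩
  intro h
  exact zmod_ne_succ hk i (congrArg Prod.snd h)

lemma expand_cyc_reach (H : Multigraph V E) (k : ℕ) (hk : 1 ≤ k)
    (φ : (v : V) → {e // v ∈ H.ends e} ≃ ZMod (2 * k + 1)) (v : V) (i j : ZMod (2*k+1)) :
    (H.expand k φ).toSimple.Reachable (v, i) (v, j) := by
  obtain ⟨m, rfl⟩ := zmod_exists_nat i j
  induction m with
  | zero =>
      have h0 : i + ((0 : ℕ) : ZMod (2*k+1)) = i := by push_cast; ring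
      rw [h0]
  | succ m ih =>
      have h1 : i + ((m + 1 : ℕ) : ZMod (2*k+1)) = (i + (m : ℕ)) + 1 := by push_cast; ring
      rw [h1]
      exact ih.trans (expand_cyc_adj H k hk φ v (i + (m : ℕ))).reachable

lemma expand_reach (H : Multigraph V E) (k : ℕ) (hk : 1 ≤ k)
    (φ : (v : V) → {e // v ∈ H.ends e} ≃ ZMod (2 * k + 1)) {u w : V}
    (h : H.toSimple.Reachable u w) (i j : ZMod (2*k+1)) :
    (H.expand k φ).toSimple.Reachable (u, i) (w, j) := by
  obtain ⟨p⟩ := h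
  refine (expand_cyc_reach H k hk φ u i 0).trans
    (SimpleGraph.Reachable.trans ?_ (expand_cyc_reach H k hk φ w 0 j))
  clear i j
  induction p with
  | nil => rfl
  | @cons a b c hab p ih =>
      refine SimpleGraph.Reachable.trans ?_ ih
      obtain ⟨hne, e, he⟩ := hab
      have ha : a ∈ H.ends e := by rw [he]; exact Sym2.mem_mk_left a b
      have hb : b ∈ H.ends e := by rw [he]; exact Sym2.mem_mk_right a b
      have hadj : (H.expand k φ).toSimple.Adj (a, φ a ⟨e, ha⟩) (b, φ b ⟨e, hb⟩) := by
        refine ⟨?_, Sum.inl e, ?_⟩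
        · intro hcontra
          exact hne (congrArg Prod.fst hcontra)
        · rw [expand_ends_inl]
          refine Eq.trans (congrArg (Sym2.map _) he) ?_
          rw [Sym2.map_pair_eq, dif_pos ha, dif_pos hb]
      exact ((expand_cyc_reach H k hk φ a 0 _).trans hadj.reachable).trans
        (expand_cyc_reach H k hk φ b _ 0)

lemma expand_connected (H : Multigraph V E) (k : ℕ) (hk : 1 ≤ k)
    (φ : (v : V) → {e // v ∈ H.ends e} ≃ ZMod (2 * k + 1)) (hH : H.Connected) :
    (H.expand k φ).Connected := by
  haveI : Nonempty (V × ZMod (2*k+1)) := by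
    obtain ⟨v⟩ := hH.nonempty
    exact ⟨(v, 0)⟩
  refine ⟨fun x y => ?_⟩
  obtain ⟨u, i⟩ := x
  obtain ⟨w, j⟩ := y
  exact expand_reach H k hk φ (hH.preconnected u w) i j

lemma expand_matching (H : Multigraph V E) (k : ℕ)
    (φ : (v : V) → {e // v ∈ H.ends e} ≃ ZMod (2 * k + 1)) :
    (H.expand k φ).IsPerfectMatching (Set.range Sum.inl) := by
  constructor
  · intro e _ v _
    exact Set.mem_univ v
  · rintro ⟨v, i⟩ -
    refine ⟨Sum.inl ((φ v).symm i).1, ⟨⟨_, rfl⟩, ?_⟩, ?_⟩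
    · rw [mem_expand_inl]
      refine ⟨((φ v).symm i).2, ?_⟩
      have h4 : (⟨((φ v).symm i).1, ((φ v).symm i).2⟩ : {e // v ∈ H.ends e}) = (φ v).symm i :=
        Subtype.ext rfl
      rw [h4, Equiv.apply_symm_apply]
    · rintro e' ⟨⟨e, rfl⟩, hm⟩
      rw [mem_expand_inl] at hm
      obtain ⟨h, hφ⟩ := hm
      have h3 : (φ v).symm i = ⟨e, h⟩ := by rw [Equiv.symm_apply_eq, hφ]
      exact congrArg Sum.inl (congrArg Subtype.val h3).symm

open Classical in
lemma expand_cut [Fintype V] [Fintype E] (H : Multigraph V E) (k : ℕ) (hk : 1 ≤ k)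
    (φ : (v : V) → {e // v ∈ H.ends e} ≃ ZMod (2 * k + 1)) (hH : H.IsRGraph (2*k+1))
    (X : Set (V × ZMod (2*k+1))) (hX : Odd (Nat.card X)) :
    2 * k + 1 ≤ Nat.card ((H.expand k φ).cut X) := by
  classical
  have hodd : Odd (Nat.card ((H.expand k φ).cut X)) := by
    refine odd_card_cut _ (expand_loopless H k hk φ hH.1) (fun x => ?_) X hX
    obtain ⟨w, i⟩ := x
    rw [expand_degree H k hk φ w i]
    exact ⟨k, by ring⟩
  by_cases hsplit : ∃ v : V, (∃ i, (v, i) ∈ X) ∧ (∃ j, (v, j) ∉ X)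
  · obtain ⟨v, ⟨i, hi⟩, ⟨j, hj⟩⟩ := hsplit
    obtain ⟨p, hp1, hp2⟩ := exists_boundary (fun x => (v, x) ∈ X) i hi j hj
    obtain ⟨q, hq1, hq2⟩ := exists_boundary (fun x => (v, x) ∉ X) j hj i (not_not_intro hi)
    have hq2' : (v, q + 1) ∈ X := not_not.mp hq2
    have hpq : p ≠ q := fun h => hq1 (h ▸ hp1)
    have hmem1 : ∀ t : Fin k, (Sum.inr (v, p, t) : E ⊕ V × ZMod (2*k+1) × Fin k)
        ∈ (H.expand k φ).cut X :=
      fun t => ⟨(v, p), hp1, (v, p + 1), hp2, expand_ends_inr H k φ v p t⟩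
    have hmem2 : ∀ t : Fin k, (Sum.inr (v, q, t) : E ⊕ V × ZMod (2*k+1) × Fin k)
        ∈ (H.expand k φ).cut X :=
      fun t => ⟨(v, q + 1), hq2', (v, q), hq1,
        (expand_ends_inr H k φ v q t).trans Sym2.eq_swap⟩
    have h2k : 2 * k ≤ Nat.card ((H.expand k φ).cut X) := by
      have hle : Nat.card (Fin k ⊕ Fin k) ≤ Nat.card ((H.expand k φ).cut X) := by
        refine Nat.card_le_card_of_injective
          (fun t => match t with
            | Sum.inl t => (⟨Sum.inr (v, p, t), hmem1 t⟩ : ((H.expand k φ).cut X))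
            | Sum.inr t => ⟨Sum.inr (v, q, t), hmem2 t⟩) ?_
        rintro (a | a) (b | b) h <;>
          simp only [Subtype.mk.injEq, Sum.inr.injEq, Prod.mk.injEq] at h
        · exact congrArg Sum.inl h.2.2
        · exact absurd h.2.1 hpq
        · exact absurd h.2.1 (Ne.symm hpq)
        · exact congrArg Sum.inr h.2.2
      have hcard : Nat.card (Fin k ⊕ Fin k) = 2 * k := by
        simp [Nat.card_eq_fintype_card]
        ring
      omega
    obtain ⟨m, hm⟩ := hodd
    omega
  · push_neg at hsplit
    set Y : Set V := {v | (v, 0) ∈ X} with hY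
    have hXY : X = Y ×ˢ (Set.univ : Set (ZMod (2*k+1))) := by
      ext x
      obtain ⟨v, i⟩ := x
      simp only [Set.mem_prod, Set.mem_univ, and_true, hY, Set.mem_setOf_eq]
      constructor
      · intro h
        exact hsplit v ⟨i, h⟩ 0
      · intro h
        exact hsplit v ⟨0, h⟩ i
    have hcardX : Nat.card X = Nat.card Y * (2*k+1) := by
      rw [hXY, Nat.card_congr (Equiv.Set.prod Y Set.univ), Nat.card_prod]
      congr 1
      rw [Nat.card_congr (Equiv.Set.univ _)]
      haveI : NeZero (2*k+1) := ⟨by omega⟩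
      simp [Nat.card_eq_fintype_card]
    have hYodd : Odd (Nat.card Y) := by
      rw [hcardX] at hX
      by_contra hcon
      rw [Nat.not_odd_iff_even] at hcon
      rw [Nat.odd_iff, Nat.mul_mod, (Nat.even_iff).mp hcon] at hX
      simp at hX
    have hmap : ∀ e ∈ H.cut Y, (Sum.inl e : E ⊕ V × ZMod (2*k+1) × Fin k)
        ∈ (H.expand k φ).cut X := by
      rintro e ⟨u, hu, w, hw, he⟩
      have hu' : u ∈ H.ends e := by rw [he]; exact Sym2.mem_mk_left _ _
      have hw' : w ∈ H.ends e := by rw [he]; exact Sym2.mem_mk_right _ _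
      refine ⟨(u, φ u ⟨e, hu'⟩), ?_, (w, φ w ⟨e, hw'⟩), ?_, ?_⟩
      · rw [hXY]
        exact ⟨hu, Set.mem_univ _⟩
      · rw [hXY]
        rintro ⟨h, -⟩
        exact hw h
      · rw [expand_ends_inl]
        refine Eq.trans (congrArg (Sym2.map _) he) ?_
        rw [Sym2.map_pair_eq, dif_pos hu', dif_pos hw']
    calc 2*k+1 ≤ Nat.card (H.cut Y) := hH.2.2.2 Y hYodd
      _ ≤ Nat.card ((H.expand k φ).cut X) := by
          refine Nat.card_le_card_of_injective
            (fun e => (⟨Sum.inl e.1, hmap e.1 e.2⟩ : ((H.expand k φ).cut X))) ?_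
          rintro ⟨a, ha⟩ ⟨b, hb⟩ h
          simp only [Subtype.mk.injEq, Sum.inl.injEq] at h
          exact Subtype.ext h

end Multigraph
/-- The cycle expansion of a (2k+1)-graph H (k ≥ 1) is a (2k+1)-graph, and
the old edges of H form a perfect matching of it. -/
theorem expand_is_rGraph {V E : Type} [Fintype V] [Fintype E]
    (k : ℕ) (hk : 1 ≤ k) (H : Multigraph V E) (hH : H.IsRGraph (2 * k + 1))
    (φ : (v : V) → {e : E // v ∈ H.ends e} ≃ ZMod (2 * k + 1)) :
    (H.expand k φ).IsRGraph (2 * k + 1) ∧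
    (H.expand k φ).IsPerfectMatching (Set.range Sum.inl) := by
  refine ⟨⟨Multigraph.expand_loopless H k hk φ hH.1,
    Multigraph.expand_connected H k hk φ hH.2.1,
    fun x => ?_,
    fun X hX => Multigraph.expand_cut H k hk φ hH X hX⟩,
    Multigraph.expand_matching H k φ⟩
  obtain ⟨w, i⟩ := x
  exact Multigraph.expand_degree H k hk φ w i
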